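/- arXiv:1701.05344 — 7 statements merged into one kernel-verified Lean document; each statement's English description precedes it below -/
import Mathlib

section
/- If J is a real square matrix with J + Jᵀ positive definite and F is a real square matrix with F + Fᵀ positive semidefinite, then I + J·F is invertible. -/
open Matrix

theorem stmt0 {m : ℕ} (J F : Matrix (Fin m) (Fin m) ℝ)
    (hJ : (J + Jᵀ).PosDef) (hF : (F + Fᵀ).PosSemidef) :
    IsUnit (1 + J * F) := by
  rw [← Matrix.mulVec_injective_iff_isUnit]
  intro a b hab
  set x := a - b with hxdef
  suffices h0 : x = 0 by
    have := sub_eq_zero.mp h0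
    exact this
  have hx : x + J *ᵥ (F *ᵥ x) = 0 := by
    have : (1 + J * F) *ᵥ x = 0 := by
      rw [hxdef, mulVec_sub, hab, sub_self]
    rwa [add_mulVec, one_mulVec, ← Matrix.mulVec_mulVec] at this
  set y := F *ᵥ x with hy
  have hJy : J *ᵥ y = -x := by
    have := hx
    linear_combination (norm := module) hx
  by_cases hy0 : y = 0
  · have : x = 0 := by
      have := hJy
      rw [hy0, Matrix.mulVec_zero] at this
      simpa using this.symm
    exact this
  · exfalso
    have hpos := hJ.dotProduct_mulVec_pos hy0
    have h1 : y ⬝ᵥ (J + Jᵀ) *ᵥ y = 2 * (y ⬝ᵥ J *ᵥ y) := by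
      rw [add_mulVec, dotProduct_add]
      have : y ⬝ᵥ Jᵀ *ᵥ y = y ⬝ᵥ J *ᵥ y := by
        rw [Matrix.dotProduct_mulVec, vecMul_transpose, dotProduct_comm]
      rw [this]; ring
    have h2 : y ⬝ᵥ J *ᵥ y = -(x ⬝ᵥ y) := by
      rw [hJy, dotProduct_neg, dotProduct_comm]
    have h3 : x ⬝ᵥ (F + Fᵀ) *ᵥ x = 2 * (x ⬝ᵥ y) := by
      rw [add_mulVec, dotProduct_add, hy]
      have : x ⬝ᵥ Fᵀ *ᵥ x = x ⬝ᵥ F *ᵥ x := by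
        rw [Matrix.dotProduct_mulVec, vecMul_transpose, dotProduct_comm]
      rw [this]; ring
    have hF2 := hF.dotProduct_mulVec_nonneg x
    simp only [star_trivial] at hF2 hpos
    rw [h3] at hF2
    rw [h1, h2] at hpos
    linarith
end

section
/- Let F be a real square matrix with F + Fᵀ positive semidefinite and J a real square matrix with J + Jᵀ positive definite, and set Δ = F(I + JF)^{-1} (well-defined by invertibility of I + JF). Then Δ(J + Jᵀ)Δᵀ ≤ Δ + Δᵀ in the Loewner order. -/
open Matrix

theorem stmt1 {m : ℕ} (J F : Matrix (Fin m) (Fin m) ℝ)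
    (hJ : (J + Jᵀ).PosDef) (hF : (F + Fᵀ).PosSemidef) :
    letI Δ := F * (1 + J * F)⁻¹
    (Δ + Δᵀ - Δ * (J + Jᵀ) * Δᵀ).PosSemidef := by
  set Δ := F * (1 + J * F)⁻¹ with hΔdef
  -- invertibility of 1 + J*F
  have hdet : (1 + J * F).det ≠ 0 := by
    intro h
    obtain ⟨v, hv, hveq⟩ := (Matrix.exists_mulVec_eq_zero_iff).2 h
    set w := F *ᵥ v with hw
    have hJw : J *ᵥ w = -v := by
      rw [add_mulVec, one_mulVec, ← mulVec_mulVec] at hveq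
      linear_combination (norm := module) hveq
    by_cases hw0 : w = 0
    · apply hv
      have : J *ᵥ (0 : Fin m → ℝ) = -v := hw0 ▸ hJw
      simpa using this.symm
    · have hpos : 0 < w ⬝ᵥ ((J + Jᵀ) *ᵥ w) := by simpa using hJ.dotProduct_mulVec_pos hw0
      have hFpos : 0 ≤ v ⬝ᵥ ((F + Fᵀ) *ᵥ v) := by simpa using hF.dotProduct_mulVec_nonneg v
      have ht : ∀ (M : Matrix (Fin m) (Fin m) ℝ) (x : Fin m → ℝ),
          x ⬝ᵥ Mᵀ *ᵥ x = x ⬝ᵥ M *ᵥ x := fun M x => by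
        rw [mulVec_transpose, dotProduct_comm, ← dotProduct_mulVec]
      have e1 : w ⬝ᵥ ((J + Jᵀ) *ᵥ w) = -(w ⬝ᵥ v) - (w ⬝ᵥ v) := by
        rw [add_mulVec, dotProduct_add, ht, hJw, dotProduct_neg]
        ring
      have e2 : v ⬝ᵥ ((F + Fᵀ) *ᵥ v) = v ⬝ᵥ w + v ⬝ᵥ w := by
        rw [add_mulVec, dotProduct_add, ht, ← hw]
      have hc : w ⬝ᵥ v = v ⬝ᵥ w := dotProduct_comm _ _
      rw [e2] at hFpos
      rw [e1] at hpos
      linarith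
  have hA : IsUnit (1 + J * F).det := isUnit_iff_ne_zero.mpr hdet
  have hB : IsUnit (1 + F * J).det := by
    rwa [add_comm, Matrix.det_mul_add_one_comm, add_comm] at hA
  -- push-through identity
  have h1 : (1 + F * J) * F = F * (1 + J * F) := by noncomm_ring
  have key : F * (1 + J * F)⁻¹ = (1 + F * J)⁻¹ * F := by
    calc F * (1 + J * F)⁻¹
        = (1 + F * J)⁻¹ * ((1 + F * J) * F * (1 + J * F)⁻¹) := by
          rw [← Matrix.mul_assoc, ← Matrix.mul_assoc, Matrix.nonsing_inv_mul _ hB, one_mul]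
      _ = (1 + F * J)⁻¹ * (F * (1 + J * F) * (1 + J * F)⁻¹) := by rw [h1]
      _ = (1 + F * J)⁻¹ * F := by
          rw [Matrix.mul_assoc, Matrix.mul_nonsing_inv _ hA, mul_one]
  set B := 1 + F * J with hBdef
  set C := B⁻¹ with hCdef
  have hCB : C * B = 1 := Matrix.nonsing_inv_mul _ hB
  have hBtCt : Bᵀ * Cᵀ = 1 := by
    rw [hCdef, Matrix.transpose_nonsing_inv, Matrix.mul_nonsing_inv]
    rwa [Matrix.det_transpose]
  have expand : F + Fᵀ = F * Bᵀ + B * Fᵀ - F * (J + Jᵀ) * Fᵀ := by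
    rw [hBdef]
    simp only [Matrix.transpose_add, Matrix.transpose_one, Matrix.transpose_mul]
    noncomm_ring
  have main : Δ + Δᵀ - Δ * (J + Jᵀ) * Δᵀ = C * (F + Fᵀ) * Cᵀ := by
    have hΔ : Δ = C * F := key
    rw [hΔ, Matrix.transpose_mul, expand]
    have h2 : C * (F * Bᵀ + B * Fᵀ - F * (J + Jᵀ) * Fᵀ) * Cᵀ
        = C * F * (Bᵀ * Cᵀ) + C * B * (Fᵀ * Cᵀ) - C * F * (J + Jᵀ) * (Fᵀ * Cᵀ) := by
      noncomm_ring
    rw [h2, hBtCt, hCB, mul_one, one_mul]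
  rw [main]
  have := hF.mul_mul_conjTranspose_same C
  rwa [Matrix.conjTranspose_eq_transpose_of_trivial] at this
end

section
/- For any real matrices M ∈ ℝ^{n×m}, N ∈ ℝ^{m×n}, any real m×m matrix Δ satisfying Δ(E)Δᵀ ≤ Δ + Δᵀ for a positive definite symmetric E, and any scalar ρ > 0, the inequality Sym(MΔN) ≤ Sym(M E^{-1} N) + ρ^{-2} M E^{-1} Mᵀ + ρ² Nᵀ E^{-1} N holds in the Loewner order. -/
open Matrix

lemma psd_add {m : ℕ} {A B : Matrix (Fin m) (Fin m) ℝ}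
    (hA : A.PosSemidef) (hB : B.PosSemidef) : (A + B).PosSemidef := by
  refine ⟨hA.1.add hB.1, fun x => ?_⟩
  have := add_nonneg (hA.2 x) (hB.2 x)
  simpa [add_mulVec, dotProduct_add, add_mul, mul_add, Finsupp.sum_add] using this

lemma psd_smul {m : ℕ} {A : Matrix (Fin m) (Fin m) ℝ} {c : ℝ}
    (hA : A.PosSemidef) (hc : 0 ≤ c) : (c • A).PosSemidef := by
  refine ⟨by rw [Matrix.IsHermitian, conjTranspose_smul, star_trivial, hA.1.eq], fun x => ?_⟩
  have := mul_nonneg hc (hA.2 x)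
  simpa [smul_mulVec, dotProduct_smul, smul_eq_mul, Finsupp.mul_sum, mul_assoc, mul_left_comm] using this

theorem stmt3 {n m : ℕ} (M : Matrix (Fin n) (Fin m) ℝ) (N : Matrix (Fin m) (Fin n) ℝ)
    (E Δ : Matrix (Fin m) (Fin m) ℝ) (hE : E.PosDef) (hEsymm : E.IsSymm)
    (hΔ : (Δ + Δᵀ - Δ * E * Δᵀ).PosSemidef) (ρ : ℝ) (hρ : 0 < ρ) :
    ((M * E⁻¹ * N + (M * E⁻¹ * N)ᵀ) + (ρ ^ 2)⁻¹ • (M * E⁻¹ * Mᵀ)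
        + (ρ ^ 2) • (Nᵀ * E⁻¹ * N)
      - (M * Δ * N + (M * Δ * N)ᵀ)).PosSemidef := by
  have hdet : IsUnit E.det := hE.det_pos.ne'.isUnit
  have h1 : E⁻¹ * E = 1 := nonsing_inv_mul E hdet
  have h2 : E * E⁻¹ = 1 := mul_nonsing_inv E hdet
  have hEinvT : E⁻¹ᵀ = E⁻¹ := by
    rw [transpose_nonsing_inv, hEsymm.eq]
  set F : Matrix (Fin m) (Fin n) ℝ := ρ⁻¹ • ((E⁻¹ - Δᵀ) * Mᵀ) + ρ • (E⁻¹ * N) with hF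
  have h3 : ∀ (X : Matrix (Fin m) (Fin n) ℝ), E⁻¹ * (E * X) = X :=
    fun X => nonsing_inv_mul_cancel_left E X hdet
  have h4 : ∀ (X : Matrix (Fin m) (Fin n) ℝ), E * (E⁻¹ * X) = X :=
    fun X => mul_nonsing_inv_cancel_left E X hdet
  have key : ((M * E⁻¹ * N + (M * E⁻¹ * N)ᵀ) + (ρ ^ 2)⁻¹ • (M * E⁻¹ * Mᵀ)
        + (ρ ^ 2) • (Nᵀ * E⁻¹ * N)
      - (M * Δ * N + (M * Δ * N)ᵀ))
      = Fᵀ * (E * F) + (ρ ^ 2)⁻¹ • (M * ((Δ + Δᵀ - Δ * E * Δᵀ) * Mᵀ)) := by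
    have hρ2 : ρ⁻¹ * ρ = 1 := inv_mul_cancel₀ hρ.ne'
    have hρ3 : ρ * ρ⁻¹ = 1 := mul_inv_cancel₀ hρ.ne'
    simp only [hF, transpose_add, transpose_smul, transpose_mul, transpose_sub,
      transpose_transpose, hEinvT, Matrix.add_mul, Matrix.mul_add, Matrix.sub_mul,
      Matrix.mul_sub, Matrix.smul_mul, Matrix.mul_smul, Matrix.mul_assoc, h3, h4,
      smul_smul, smul_sub, smul_add, hρ2, hρ3, one_smul, sq, mul_inv]
    abel
  rw [key]
  have hpsd1 : (Fᵀ * (E * F)).PosSemidef := by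
    have := hE.posSemidef.conjTranspose_mul_mul_same F
    simpa [Matrix.mul_assoc, conjTranspose_eq_transpose_of_trivial] using this
  have hpsd2 : ((ρ ^ 2)⁻¹ • (M * ((Δ + Δᵀ - Δ * E * Δᵀ) * Mᵀ))).PosSemidef := by
    refine psd_smul ?_ (by positivity)
    have := hΔ.mul_mul_conjTranspose_same M
    simpa [Matrix.mul_assoc, conjTranspose_eq_transpose_of_trivial] using this
  exact psd_add hpsd1 hpsd2
end

section
/- Let A ∈ ℝ^{n×n}, 0 < α < 1, θ = (1−α)π/2, r = e^{iθ}. If there exists a Hermitian positive definite matrix X ∈ ℂ^{n×n} such that (rX + r̄X̄)ᵀAᵀ + A(rX + r̄X̄) is negative definite, then every eigenvalue λ of A satisfies |arg(λ)| > απ/2. -/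
open Matrix Complex ComplexOrder

theorem stmt6 {n : ℕ} (A : Matrix (Fin n) (Fin n) ℝ) (α : ℝ) (hα : 0 < α) (hα1 : α < 1)
    (X : Matrix (Fin n) (Fin n) ℂ) (hX : X.PosDef) :
    letI θ : ℝ := (1 - α) * Real.pi / 2
    letI r : ℂ := Complex.exp (θ * Complex.I)
    letI Aℂ : Matrix (Fin n) (Fin n) ℂ := A.map (fun a => (a : ℂ))
    letI S : Matrix (Fin n) (Fin n) ℂ := r • X + (starRingEnd ℂ r) • X.map (starRingEnd ℂ)
    (-(Sᵀ * Aℂᵀ + Aℂ * S)).PosDef →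
    ∀ lam ∈ spectrum ℂ Aℂ, |lam.arg| > α * Real.pi / 2 := by
  intro hP lam hlam
  by_contra hcon
  push_neg at hcon
  set θ : ℝ := (1 - α) * Real.pi / 2 with hθdef
  set r : ℂ := Complex.exp ((θ : ℂ) * Complex.I) with hrdef
  set Aℂ : Matrix (Fin n) (Fin n) ℂ := A.map (fun a => (a : ℂ)) with hAdef
  set S : Matrix (Fin n) (Fin n) ℂ := r • X + (starRingEnd ℂ r) • X.map (starRingEnd ℂ) with hSdef
  -- eigenvector of transpose
  have h1 : ¬ IsUnit (lam • (1 : Matrix (Fin n) (Fin n) ℂ) - Aℂ) := by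
    have := spectrum.mem_iff.mp hlam
    rwa [Algebra.algebraMap_eq_smul_one] at this
  have hdet : (lam • (1 : Matrix (Fin n) (Fin n) ℂ) - Aℂ).det = 0 := by
    by_contra hd
    exact h1 ((Matrix.isUnit_iff_isUnit_det _).mpr (isUnit_iff_ne_zero.mpr hd))
  have hdetT : ((lam • (1 : Matrix (Fin n) (Fin n) ℂ) - Aℂ)ᵀ).det = 0 := by
    rw [Matrix.det_transpose]; exact hdet
  obtain ⟨v, hv, hveq⟩ := (Matrix.exists_mulVec_eq_zero_iff).mpr hdetT
  have heig : Aℂᵀ *ᵥ v = lam • v := by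
    have ht : (lam • (1 : Matrix (Fin n) (Fin n) ℂ) - Aℂ)ᵀ = lam • 1 - Aℂᵀ := by
      rw [Matrix.transpose_sub, Matrix.transpose_smul, Matrix.transpose_one]
    rw [ht, Matrix.sub_mulVec, Matrix.smul_mulVec, Matrix.one_mulVec, sub_eq_zero] at hveq
    exact hveq.symm
  -- Hermitian: map conj = transpose
  have hXc : X.map (starRingEnd ℂ) = Xᵀ := by
    ext i j
    have h := congrFun (congrFun hX.1 j) i
    simpa [Matrix.conjTranspose_apply] using h
  set a : ℂ := star v ⬝ᵥ (X *ᵥ v) with hadef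
  set b : ℂ := star v ⬝ᵥ (Xᵀ *ᵥ v) with hbdef
  have ha := hX.dotProduct_mulVec_pos hv
  have hb := hX.transpose.dotProduct_mulVec_pos hv
  have haim : a.im = 0 := ((Complex.lt_def.mp ha).2).symm
  have hbim : b.im = 0 := ((Complex.lt_def.mp hb).2).symm
  have ha_re : 0 < a.re := by simpa using (Complex.lt_def.mp ha).1
  have hb_re : 0 < b.re := by simpa using (Complex.lt_def.mp hb).1
  have hc : star v ⬝ᵥ (S *ᵥ v) = r * a + (starRingEnd ℂ) r * b := by
    rw [hSdef, hXc, Matrix.add_mulVec, Matrix.smul_mulVec, Matrix.smul_mulVec,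
      dotProduct_add, dotProduct_smul, dotProduct_smul,
      smul_eq_mul, smul_eq_mul]
  have hST : Sᵀ = r • Xᵀ + (starRingEnd ℂ) r • X := by
    rw [hSdef, Matrix.transpose_add, Matrix.transpose_smul, Matrix.transpose_smul, hXc,
      Matrix.transpose_transpose]
  have hc' : star v ⬝ᵥ (Sᵀ *ᵥ v) = r * b + (starRingEnd ℂ) r * a := by
    rw [hST, Matrix.add_mulVec, Matrix.smul_mulVec, Matrix.smul_mulVec,
      dotProduct_add, dotProduct_smul, dotProduct_smul,
      smul_eq_mul, smul_eq_mul]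
  have hAconj : Aℂᵀ *ᵥ star v = star (Aℂᵀ *ᵥ v) := by
    ext i
    simp [Matrix.mulVec, dotProduct, hAdef, Matrix.transpose_apply, Matrix.map_apply,
      map_sum, Complex.conj_ofReal]
  have hvecmul : ∀ w : Fin n → ℂ,
      star v ⬝ᵥ (Aℂ *ᵥ w) = (starRingEnd ℂ) lam * (star v ⬝ᵥ w) := by
    intro w
    rw [Matrix.dotProduct_mulVec, ← Matrix.mulVec_transpose, hAconj, heig]
    simp [star_smul, smul_dotProduct, smul_eq_mul]
  have hq : star v ⬝ᵥ ((Sᵀ * Aℂᵀ + Aℂ * S) *ᵥ v)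
      = lam * (r * b + (starRingEnd ℂ) r * a)
        + (starRingEnd ℂ) lam * (r * a + (starRingEnd ℂ) r * b) := by
    rw [Matrix.add_mulVec, dotProduct_add, ← Matrix.mulVec_mulVec,
      ← Matrix.mulVec_mulVec, heig, Matrix.mulVec_smul, dotProduct_smul,
      hvecmul (S *ᵥ v), hc, hc', smul_eq_mul]
  have hneg := hP.dotProduct_mulVec_pos hv
  rw [Matrix.neg_mulVec, dotProduct_neg, hq] at hneg
  have hre : (lam * (r * b + (starRingEnd ℂ) r * a)
        + (starRingEnd ℂ) lam * (r * a + (starRingEnd ℂ) r * b)).re < 0 := by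
    have := (Complex.lt_def.mp hneg).1
    simp only [Complex.zero_re, Complex.neg_re] at this
    linarith
  have hrval : r = (Real.cos θ : ℂ) + (Real.sin θ : ℂ) * Complex.I := by
    rw [hrdef, Complex.exp_mul_I, Complex.ofReal_cos, Complex.ofReal_sin]
  have h2 : (lam * (r * b + (starRingEnd ℂ) r * a)
        + (starRingEnd ℂ) lam * (r * a + (starRingEnd ℂ) r * b)).re
      = 2 * (a.re * (lam.re * Real.cos θ + lam.im * Real.sin θ)
        + b.re * (lam.re * Real.cos θ - lam.im * Real.sin θ)) := by
    rw [hrval]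
    simp only [Complex.add_re, Complex.mul_re, Complex.add_im, Complex.mul_im,
      Complex.ofReal_re, Complex.ofReal_im, Complex.I_re, Complex.I_im,
      Complex.conj_re, Complex.conj_im, haim, hbim, map_add, _root_.map_mul,
      Complex.conj_ofReal, Complex.conj_I, Complex.neg_re, Complex.neg_im]
    ring
  have hkey : a.re * (lam.re * Real.cos θ + lam.im * Real.sin θ)
      + b.re * (lam.re * Real.cos θ - lam.im * Real.sin θ) < 0 := by
    rw [h2] at hre; linarith
  have hpi := Real.pi_pos
  have harg1 : -(α * Real.pi / 2) ≤ lam.arg := (abs_le.mp hcon).1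
  have harg2 : lam.arg ≤ α * Real.pi / 2 := (abs_le.mp hcon).2
  have hθpos : 0 < θ := by
    rw [hθdef]; nlinarith
  have hcos1 : 0 ≤ Real.cos (θ - lam.arg) := by
    apply Real.cos_nonneg_of_mem_Icc
    constructor
    · rw [hθdef]; nlinarith
    · rw [hθdef]; nlinarith
  have hcos2 : 0 ≤ Real.cos (θ + lam.arg) := by
    apply Real.cos_nonneg_of_mem_Icc
    constructor
    · rw [hθdef]; nlinarith
    · rw [hθdef]; nlinarith
  rcases eq_or_ne lam 0 with h0 | h0
  · rw [h0] at hkey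
    simp at hkey
  · have habs : ‖lam‖ ≠ 0 := by simpa using h0
    have hx : lam.re = ‖lam‖ * Real.cos lam.arg := by
      rw [Complex.cos_arg h0]; field_simp
    have hy : lam.im = ‖lam‖ * Real.sin lam.arg := by
      rw [Complex.sin_arg]; field_simp
    have e1 : lam.re * Real.cos θ + lam.im * Real.sin θ
        = ‖lam‖ * Real.cos (θ - lam.arg) := by
      rw [hx, hy, Real.cos_sub]; ring
    have e2 : lam.re * Real.cos θ - lam.im * Real.sin θ
        = ‖lam‖ * Real.cos (θ + lam.arg) := by
      rw [hx, hy, Real.cos_add]; ring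
    rw [e1, e2] at hkey
    have hρ : 0 ≤ ‖lam‖ := norm_nonneg _
    have t1 : 0 ≤ a.re * (‖lam‖ * Real.cos (θ - lam.arg)) :=
      mul_nonneg ha_re.le (mul_nonneg hρ hcos1)
    have t2 : 0 ≤ b.re * (‖lam‖ * Real.cos (θ + lam.arg)) :=
      mul_nonneg hb_re.le (mul_nonneg hρ hcos2)
    linarith
end

section
/- Let A ∈ ℝ^{n×n}, 1 ≤ α < 2, θ = π − απ/2. If there exists a symmetric positive definite X ∈ ℝ^{n×n} such that the block matrix [[(AᵀX + XA)sinθ, (XA − AᵀX)cosθ],[(AᵀX − XA)cosθ, (AᵀX + XA)sinθ]] is negative definite, then every eigenvalue λ of A satisfies |arg(λ)| > απ/2. -/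
open Matrix

lemma dotT {n : ℕ} (A : Matrix (Fin n) (Fin n) ℝ) (u w : Fin n → ℝ) :
    u ⬝ᵥ (Aᵀ *ᵥ w) = (A *ᵥ u) ⬝ᵥ w := by
  rw [Matrix.dotProduct_mulVec, Matrix.vecMul_transpose]

lemma dotS {n : ℕ} {X : Matrix (Fin n) (Fin n) ℝ} (hXs : Xᵀ = X) (u w : Fin n → ℝ) :
    u ⬝ᵥ (X *ᵥ w) = w ⬝ᵥ (X *ᵥ u) := by
  conv_lhs => rw [← hXs]
  rw [dotT, dotProduct_comm]

lemma quadform {n : ℕ} (A X : Matrix (Fin n) (Fin n) ℝ) (hXs : Xᵀ = X)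
    (x y : Fin n → ℝ) (p q s c : ℝ)
    (hx : A *ᵥ x = p • x - q • y) (hy : A *ᵥ y = q • x + p • y) :
    (Sum.elim x y) ⬝ᵥ ((fromBlocks (s • (Aᵀ*X + X*A)) (c • (X*A - Aᵀ*X))
      (c • (Aᵀ*X - X*A)) (s • (Aᵀ*X + X*A))) *ᵥ (Sum.elim x y))
      = 2*(s*p + c*q)*(x ⬝ᵥ (X *ᵥ x) + y ⬝ᵥ (X *ᵥ y)) := by
  rw [fromBlocks_mulVec]
  simp only [Sum.elim_comp_inl, Sum.elim_comp_inr]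
  rw [show (Sum.elim x y : Fin n ⊕ Fin n → ℝ) = x ⊕ᵥ y from rfl,
    sumElim_dotProduct_sumElim]
  simp only [smul_mulVec, add_mulVec, sub_mulVec, ← mulVec_mulVec,
    dotProduct_add, dotProduct_sub, dotProduct_smul, dotT, hx, hy,
    mulVec_add, mulVec_sub, mulVec_smul, add_dotProduct, sub_dotProduct,
    smul_dotProduct, smul_eq_mul]
  rw [dotS hXs x y]
  ring

theorem stmt7 {n : ℕ} (A : Matrix (Fin n) (Fin n) ℝ) (α : ℝ) (hα : 1 ≤ α) (hα2 : α < 2)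
    (X : Matrix (Fin n) (Fin n) ℝ) (hX : X.PosDef) (hXsymm : X.IsSymm) :
    letI θ : ℝ := Real.pi - α * Real.pi / 2
    (-(fromBlocks (Real.sin θ • (Aᵀ * X + X * A)) (Real.cos θ • (X * A - Aᵀ * X))
        (Real.cos θ • (Aᵀ * X - X * A)) (Real.sin θ • (Aᵀ * X + X * A)))).PosDef →
    ∀ lam ∈ spectrum ℂ (A.map (fun a => (a : ℂ))), |lam.arg| > α * Real.pi / 2 := by
  intro hM lam hlam
  set θ : ℝ := Real.pi - α * Real.pi / 2 with hθdef
  clear_value θ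
  have hπ := Real.pi_pos
  -- eigenvector
  have hdet : ((algebraMap ℂ (Matrix (Fin n) (Fin n) ℂ)) lam - A.map (fun a => (a:ℂ))).det = 0 := by
    rw [spectrum.mem_iff] at hlam
    by_contra h
    exact hlam ((Matrix.isUnit_iff_isUnit_det _).2 (isUnit_iff_ne_zero.2 h))
  obtain ⟨v, hv0, hveq⟩ := (Matrix.exists_mulVec_eq_zero_iff).2 hdet
  have heig : (A.map (fun a => (a : ℂ))) *ᵥ v = lam • v := by
    rw [sub_mulVec, Algebra.algebraMap_eq_smul_one, smul_mulVec, one_mulVec] at hveq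
    exact (sub_eq_zero.1 hveq).symm
  set x : Fin n → ℝ := fun i => (v i).re with hxdef
  set y : Fin n → ℝ := fun i => (v i).im with hydef
  set p : ℝ := lam.re with hpdef
  set q : ℝ := lam.im with hqdef
  have hxA : A *ᵥ x = p • x - q • y := by
    funext j
    have hj := congrFun heig j
    simp only [Matrix.mulVec, dotProduct, Matrix.map_apply, Pi.smul_apply,
      smul_eq_mul] at hj
    have h := congrArg Complex.re hj
    simp only [Complex.re_sum, Complex.mul_re, Complex.ofReal_re, Complex.ofReal_im,
      zero_mul, sub_zero] at h
    simp only [Matrix.mulVec, dotProduct, hxdef, hydef, hpdef, hqdef,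
      Pi.sub_apply, Pi.smul_apply, smul_eq_mul]
    exact h
  have hyA : A *ᵥ y = q • x + p • y := by
    funext j
    have hj := congrFun heig j
    simp only [Matrix.mulVec, dotProduct, Matrix.map_apply, Pi.smul_apply,
      smul_eq_mul] at hj
    have h := congrArg Complex.im hj
    simp only [Complex.im_sum, Complex.mul_im, Complex.ofReal_re, Complex.ofReal_im,
      zero_mul, add_zero] at h
    simp only [Matrix.mulVec, dotProduct, hxdef, hydef, hpdef, hqdef,
      Pi.add_apply, Pi.smul_apply, smul_eq_mul]
    rw [h]; ring
  -- nonzero real vectors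
  have hxy : ¬ (x = 0 ∧ y = 0) := by
    rintro ⟨h1, h2⟩
    apply hv0
    funext i
    exact Complex.ext (congrFun h1 i) (congrFun h2 i)
  have hP : 0 < x ⬝ᵥ (X *ᵥ x) + y ⬝ᵥ (X *ᵥ y) := by
    have hx' : (0:ℝ) ≤ x ⬝ᵥ (X *ᵥ x) := by
      simpa using hX.posSemidef.dotProduct_mulVec_nonneg x
    have hy' : (0:ℝ) ≤ y ⬝ᵥ (X *ᵥ y) := by
      simpa using hX.posSemidef.dotProduct_mulVec_nonneg y
    rcases not_and_or.1 hxy with h | h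
    · have := hX.dotProduct_mulVec_pos h
      simp only [star_trivial] at this
      linarith
    · have := hX.dotProduct_mulVec_pos h
      simp only [star_trivial] at this
      linarith
  have hXs : Xᵀ = X := hXsymm
  -- the two strict inequalities
  have happly : ∀ (y' : Fin n → ℝ) (q' : ℝ), (A *ᵥ x = p • x - q' • y') →
      (A *ᵥ y' = q' • x + p • y') → (¬ (x = 0 ∧ y' = 0)) →
      (x ⬝ᵥ (X *ᵥ x) + y' ⬝ᵥ (X *ᵥ y') = x ⬝ᵥ (X *ᵥ x) + y ⬝ᵥ (X *ᵥ y)) →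
      Real.sin θ * p + Real.cos θ * q' < 0 := by
    intro y' q' hx' hy' hne hPeq
    have hw0 : (Sum.elim x y' : Fin n ⊕ Fin n → ℝ) ≠ 0 := by
      intro h
      apply hne
      constructor
      · funext i; exact congrFun h (Sum.inl i)
      · funext i; exact congrFun h (Sum.inr i)
    have hpos := hM.dotProduct_mulVec_pos hw0
    rw [star_trivial, neg_mulVec, dotProduct_neg] at hpos
    have hneg : (Sum.elim x y') ⬝ᵥ ((fromBlocks (Real.sin θ • (Aᵀ * X + X * A))
        (Real.cos θ • (X * A - Aᵀ * X)) (Real.cos θ • (Aᵀ * X - X * A))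
        (Real.sin θ • (Aᵀ * X + X * A))) *ᵥ (Sum.elim x y')) < 0 := by linarith
    rw [quadform A X hXs x y' p q' _ _ hx' hy', hPeq] at hneg
    nlinarith [hP]
  have key1 : Real.sin θ * p + Real.cos θ * q < 0 :=
    happly y q hxA hyA hxy rfl
  have key2 : Real.sin θ * p + Real.cos θ * (-q) < 0 := by
    refine happly (-y) (-q) ?_ ?_ ?_ ?_
    · rw [hxA]; module
    · rw [show A *ᵥ (-y) = -(A *ᵥ y) from by rw [Matrix.mulVec_neg], hyA]; module
    · rintro ⟨h1, h2⟩; exact hxy ⟨h1, by rw [← neg_neg y, h2, neg_zero]⟩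
    · rw [Matrix.mulVec_neg, neg_dotProduct, dotProduct_neg, neg_neg]
  -- trig conclusion
  have hθpos : 0 < θ := by rw [hθdef]; nlinarith
  have hθle : θ ≤ Real.pi / 2 := by rw [hθdef]; nlinarith
  have hs : 0 < Real.sin θ := Real.sin_pos_of_pos_of_lt_pi hθpos (by linarith)
  have hc : 0 ≤ Real.cos θ := Real.cos_nonneg_of_mem_Icc ⟨by linarith, hθle⟩

  have hlam0 : lam ≠ 0 := by
    intro h
    rw [hpdef, hqdef, h] at key1
    simp at key1
  have hr : 0 < ‖lam‖ := norm_pos_iff.2 hlam0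
  have hkey : Real.sin θ * p + Real.cos θ * |q| < 0 := by
    rcases abs_cases q with ⟨h, _⟩ | ⟨h, _⟩ <;> rw [h] <;> [exact key1; exact key2]
  have hcos := Complex.cos_arg hlam0
  have hsin := Complex.sin_arg lam
  have ha := Complex.arg_mem_Ioc lam
  have habs : |Real.sin lam.arg| = Real.sin |lam.arg| := by
    rcases abs_cases lam.arg with ⟨h, h'⟩ | ⟨h, h'⟩ <;> rw [h]
    · exact abs_of_nonneg (Real.sin_nonneg_of_nonneg_of_le_pi h' ha.2)
    · rw [Real.sin_neg]
      exact abs_of_nonpos (Real.sin_nonpos_of_nonpos_of_neg_pi_le (le_of_lt h') (le_of_lt ha.1))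
  have h3 : Real.sin (θ + |lam.arg|) < 0 := by
    rw [Real.sin_add, Real.cos_abs, ← habs]
    have e1 : Real.cos lam.arg = p / ‖lam‖ := hcos
    have e2 : |Real.sin lam.arg| = |q| / ‖lam‖ := by
      rw [hsin, abs_div, abs_of_pos hr]
    rw [e1, e2]
    have heq : Real.sin θ * (p / ‖lam‖) + Real.cos θ * (|q| / ‖lam‖)
        = (Real.sin θ * p + Real.cos θ * |q|) / ‖lam‖ := by
      field_simp
    rw [heq]
    exact div_neg_of_neg_of_pos hkey hr
  by_contra hcon
  push_neg at hcon
  have h4 : 0 ≤ Real.sin (θ + |lam.arg|) :=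
    Real.sin_nonneg_of_nonneg_of_le_pi (by linarith [abs_nonneg lam.arg])
      (by rw [hθdef]; linarith)
  linarith
end

section
/- Let E be symmetric positive definite, M, N real matrices of compatible dimensions, and ρ > 0. Define F = E^{-1/2}(ρ^{-1}Mᵀ + ρN) − E^{1/2}Δᵀρ^{-1}Mᵀ for a square matrix Δ. Then FᵀF = Sym(ME^{-1}N) + ρ^{-2}ME^{-1}Mᵀ + ρ²NᵀE^{-1}N − Sym(MΔN) − ρ^{-2}M(Sym(Δ) − ΔEΔᵀ)Mᵀ. -/
open Matrix

theorem stmt17 {n m : ℕ} (E R : Matrix (Fin m) (Fin m) ℝ)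
    (hE : E.PosDef) (hEsymm : E.IsSymm)
    (hR : R.PosDef) (hRsymm : R.IsSymm) (hRR : R * R = E)
    (M : Matrix (Fin n) (Fin m) ℝ) (N : Matrix (Fin m) (Fin n) ℝ)
    (Δ : Matrix (Fin m) (Fin m) ℝ) (ρ : ℝ) (hρ : 0 < ρ) :
    letI F := R⁻¹ * (ρ⁻¹ • Mᵀ + ρ • N) - R * Δᵀ * (ρ⁻¹ • Mᵀ)
    Fᵀ * F
      = (M * E⁻¹ * N + (M * E⁻¹ * N)ᵀ) + (ρ ^ 2)⁻¹ • (M * E⁻¹ * Mᵀ)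
          + (ρ ^ 2) • (Nᵀ * E⁻¹ * N)
        - (M * Δ * N + (M * Δ * N)ᵀ)
        - (ρ ^ 2)⁻¹ • (M * ((Δ + Δᵀ) - Δ * E * Δᵀ) * Mᵀ) := by
  have hdet : IsUnit R.det := isUnit_iff_ne_zero.mpr hR.det_pos.ne'
  have hAt : (R⁻¹)ᵀ = R⁻¹ := by
    rw [Matrix.transpose_nonsing_inv, hRsymm.eq]
  have hEinv : E⁻¹ = R⁻¹ * R⁻¹ := by
    rw [← hRR, Matrix.mul_inv_rev]
  have h1 : ∀ (k : ℕ) (X : Matrix (Fin m) (Fin k) ℝ), R⁻¹ * (R * X) = X := by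
    intro k X
    rw [← Matrix.mul_assoc, Matrix.nonsing_inv_mul R hdet, Matrix.one_mul]
  have h2 : ∀ (k : ℕ) (X : Matrix (Fin m) (Fin k) ℝ), R * (R⁻¹ * X) = X := by
    intro k X
    rw [← Matrix.mul_assoc, Matrix.mul_nonsing_inv R hdet, Matrix.one_mul]
  have hs1 : ρ⁻¹ * ρ = 1 := inv_mul_cancel₀ hρ.ne'
  have hs2 : ρ * ρ⁻¹ = 1 := mul_inv_cancel₀ hρ.ne'
  have hs3 : ρ⁻¹ * ρ⁻¹ = (ρ ^ 2)⁻¹ := by rw [← mul_inv, sq]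
  have hs4 : ρ * ρ = ρ ^ 2 := (sq ρ).symm
  rw [hEinv, ← hRR]
  simp only [Matrix.transpose_sub, Matrix.transpose_mul, Matrix.transpose_add,
    Matrix.transpose_smul, Matrix.transpose_transpose, hAt, hRsymm.eq,
    Matrix.sub_mul, Matrix.mul_sub, Matrix.add_mul, Matrix.mul_add,
    Matrix.smul_mul, Matrix.mul_smul, smul_smul, Matrix.mul_assoc, h1, h2,
    hs1, hs2, hs3, hs4, one_smul, smul_sub, smul_add]
  abel
end

section
/- If A and Aᵀ are similar matrices (which holds for every real square matrix A), then for symmetric positive definite X, negative definiteness of [[(AᵀX + XA)sinθ, (XA − AᵀX)cosθ],[•, (AᵀX + XA)sinθ]] for some X > 0 is equivalent to negative definiteness of Sym(Θ ⊗ (AY)) for some symmetric Y > 0, where Θ = [[sinθ, −cosθ],[cosθ, sinθ]]. -/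
open Matrix Kronecker

section Aux

variable {m l : Type*} [Fintype m] [DecidableEq m] [Fintype l] [DecidableEq l]

lemma posDef_congr {M C : Matrix m m ℝ} (hM : M.PosDef) (hC : IsUnit C) :
    (Cᵀ * M * C).PosDef := by
  have := hM.conjTranspose_mul_mul_same (B := C) (mulVec_injective_iff_isUnit.2 hC)
  simpa [conjTranspose_eq_transpose_of_trivial] using this

lemma posDef_congr_iff {M C : Matrix m m ℝ} (hC : IsUnit C) :
    (Cᵀ * M * C).PosDef ↔ M.PosDef := by
  constructor
  · intro h
    have hC' : IsUnit C⁻¹ := isUnit_nonsing_inv_iff.2 hC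
    have h2 := posDef_congr h hC'
    have : (C⁻¹)ᵀ * (Cᵀ * M * C) * C⁻¹ = M := by
      rw [transpose_nonsing_inv]
      calc Cᵀ⁻¹ * (Cᵀ * M * C) * C⁻¹
          = Cᵀ⁻¹ * Cᵀ * M * (C * C⁻¹) := by noncomm_ring
        _ = M := by
          rw [nonsing_inv_mul _ (by rw [Matrix.det_transpose]; exact (isUnit_iff_isUnit_det C).1 hC),
            mul_nonsing_inv _ (isUnit_iff_isUnit_det _ |>.1 hC)]
          simp
    rwa [this] at h2
  · exact fun hM => posDef_congr hM hC

lemma posDef_submatrix_equiv {M : Matrix m m ℝ} (e : l ≃ m) :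
    (M.submatrix e e).PosDef ↔ M.PosDef := by
  exact ⟨fun h => by simpa using h.submatrix e.symm.injective, fun h => h.submatrix e.injective⟩

end Aux

def eqv (n : ℕ) : Fin 2 × Fin n ≃ Fin n ⊕ Fin n :=
  ((finTwoEquiv.prodCongr (Equiv.refl (Fin n))).trans (Equiv.boolProdEquivSum (Fin n)))

lemma kform {n : ℕ} (θ : ℝ) (B : Matrix (Fin n) (Fin n) ℝ) :
    (!![Real.sin θ, -Real.cos θ; Real.cos θ, Real.sin θ] ⊗ₖ B) +
      (!![Real.sin θ, -Real.cos θ; Real.cos θ, Real.sin θ] ⊗ₖ B)ᵀ =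
    (fromBlocks (Real.sin θ • (B + Bᵀ)) (Real.cos θ • (Bᵀ - B))
        (Real.cos θ • (B - Bᵀ)) (Real.sin θ • (B + Bᵀ))).submatrix (eqv n) (eqv n) := by
  ext ⟨i, k⟩ ⟨j, l⟩
  fin_cases i <;> fin_cases j <;>
    simp [eqv, kroneckerMap_apply, fromBlocks, Matrix.add_apply, Matrix.smul_apply,
      Matrix.transpose_apply, finTwoEquiv, Equiv.boolProdEquivSum] <;> ring

lemma blockcongr {n : ℕ} (A X : Matrix (Fin n) (Fin n) ℝ) (hd : IsUnit X.det) (θ : ℝ) :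
    (fromBlocks 0 X⁻¹ X⁻¹ 0) *
      (fromBlocks (Real.sin θ • (Aᵀ * X + X * A)) (Real.cos θ • (X * A - Aᵀ * X))
        (Real.cos θ • (Aᵀ * X - X * A)) (Real.sin θ • (Aᵀ * X + X * A))) *
      (fromBlocks 0 X⁻¹ X⁻¹ 0) =
    fromBlocks (Real.sin θ • (A * X⁻¹ + X⁻¹ * Aᵀ)) (Real.cos θ • (X⁻¹ * Aᵀ - A * X⁻¹))
      (Real.cos θ • (A * X⁻¹ - X⁻¹ * Aᵀ)) (Real.sin θ • (A * X⁻¹ + X⁻¹ * Aᵀ)) := by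
  rw [fromBlocks_multiply, fromBlocks_multiply]
  rw [fromBlocks_inj]
  refine ⟨?_, ?_, ?_, ?_⟩ <;>
    simp [Matrix.mul_add, Matrix.add_mul, Matrix.mul_sub, Matrix.sub_mul,
      Matrix.mul_smul, Matrix.smul_mul, Matrix.mul_assoc,
      Matrix.mul_nonsing_inv_cancel_left _ _ hd, Matrix.nonsing_inv_mul_cancel_left _ _ hd,
      Matrix.mul_nonsing_inv _ hd, Matrix.nonsing_inv_mul _ hd] <;> abel

lemma key {n : ℕ} (A : Matrix (Fin n) (Fin n) ℝ) (θ : ℝ)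
    {X : Matrix (Fin n) (Fin n) ℝ} (hX : X.PosDef) :
    (-(fromBlocks (Real.sin θ • (Aᵀ * X + X * A)) (Real.cos θ • (X * A - Aᵀ * X))
        (Real.cos θ • (Aᵀ * X - X * A)) (Real.sin θ • (Aᵀ * X + X * A)))).PosDef ↔
    (-((!![Real.sin θ, -Real.cos θ; Real.cos θ, Real.sin θ] ⊗ₖ (A * X⁻¹)) +
        (!![Real.sin θ, -Real.cos θ; Real.cos θ, Real.sin θ] ⊗ₖ (A * X⁻¹))ᵀ)).PosDef := by
  have hd : IsUnit X.det := (isUnit_iff_isUnit_det X).1 hX.isUnit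
  have hXs : Xᵀ = X := by
    have := hX.isHermitian
    simpa [IsHermitian, conjTranspose_eq_transpose_of_trivial] using this
  have hYs : (X⁻¹)ᵀ = X⁻¹ := by rw [transpose_nonsing_inv, hXs]
  have hCt : (fromBlocks (0 : Matrix (Fin n) (Fin n) ℝ) X⁻¹ X⁻¹ 0)ᵀ =
      fromBlocks 0 X⁻¹ X⁻¹ 0 := by
    rw [fromBlocks_transpose, hYs]; simp
  have hCu : IsUnit (fromBlocks (0 : Matrix (Fin n) (Fin n) ℝ) X⁻¹ X⁻¹ 0) := by
    have h1 : (fromBlocks (0 : Matrix (Fin n) (Fin n) ℝ) X⁻¹ X⁻¹ 0) *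
        fromBlocks 0 X X 0 = 1 := by
      rw [fromBlocks_multiply]
      simp [Matrix.nonsing_inv_mul _ hd, ← fromBlocks_one]
    have := invertibleOfRightInverse _ _ h1
    exact isUnit_of_invertible _
  have hBt : (A * X⁻¹)ᵀ = X⁻¹ * Aᵀ := by rw [transpose_mul, hYs]
  rw [kform θ (A * X⁻¹), hBt, ← blockcongr A X hd θ]
  have hneg : -(((fromBlocks 0 X⁻¹ X⁻¹ 0) *
        (fromBlocks (Real.sin θ • (Aᵀ * X + X * A)) (Real.cos θ • (X * A - Aᵀ * X))
          (Real.cos θ • (Aᵀ * X - X * A)) (Real.sin θ • (Aᵀ * X + X * A))) *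
        (fromBlocks 0 X⁻¹ X⁻¹ 0)).submatrix (eqv n) (eqv n)) =
      ((fromBlocks 0 X⁻¹ X⁻¹ 0)ᵀ *
        (-(fromBlocks (Real.sin θ • (Aᵀ * X + X * A)) (Real.cos θ • (X * A - Aᵀ * X))
          (Real.cos θ • (Aᵀ * X - X * A)) (Real.sin θ • (Aᵀ * X + X * A)))) *
        (fromBlocks 0 X⁻¹ X⁻¹ 0)).submatrix (eqv n) (eqv n) := by
    rw [hCt]
    simp [Matrix.mul_neg, Matrix.neg_mul, Matrix.submatrix_neg]
  rw [hneg, posDef_submatrix_equiv, posDef_congr_iff hCu]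

theorem stmt18 {n : ℕ} (A : Matrix (Fin n) (Fin n) ℝ) (θ : ℝ)
    (hθ0 : 0 < θ) (hθ : θ ≤ Real.pi / 2) :
    letI Θ : Matrix (Fin 2) (Fin 2) ℝ :=
      !![Real.sin θ, -Real.cos θ; Real.cos θ, Real.sin θ]
    ((∃ X : Matrix (Fin n) (Fin n) ℝ, X.PosDef ∧
        (-(fromBlocks (Real.sin θ • (Aᵀ * X + X * A)) (Real.cos θ • (X * A - Aᵀ * X))
            (Real.cos θ • (Aᵀ * X - X * A)) (Real.sin θ • (Aᵀ * X + X * A)))).PosDef) ↔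
      (∃ Y : Matrix (Fin n) (Fin n) ℝ, Y.PosDef ∧
        (-(Θ ⊗ₖ (A * Y) + (Θ ⊗ₖ (A * Y))ᵀ)).PosDef)) := by
  constructor
  · rintro ⟨X, hX, hM⟩
    exact ⟨X⁻¹, hX.inv, (key A θ hX).mp hM⟩
  · rintro ⟨Y, hY, hK⟩
    refine ⟨Y⁻¹, hY.inv, ?_⟩
    refine (key A θ hY.inv).mpr ?_
    rw [nonsing_inv_nonsing_inv Y ((isUnit_iff_isUnit_det Y).1 hY.isUnit)]
    exact hK
end
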